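/- Let (a_n) be a monotone sequence of reals in [0,1]. Then for every ε > 0 and every g : ℕ → ℕ there exists N ≤ g̃^(⌈1/ε⌉)(0) such that for all i, j ∈ [N, N+g(N)], |a_i − a_j| ≤ ε. -/

import Mathlib

lemma metastable_aux (a : ℕ → ℝ) (ha : ∀ n, a n ∈ Set.Icc (0:ℝ) 1)
    (hm : Monotone a) (ε : ℝ) (hε : 0 < ε) (g : ℕ → ℕ) :
    ∃ N ≤ (fun n => n + g n)^[⌈1/ε⌉₊] 0,
      ∀ i, N ≤ i → i ≤ N + g N → ∀ j, N ≤ j → j ≤ N + g N → |a i - a j| ≤ ε := by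
  set F := fun n => n + g n with hF
  set K := ⌈1/ε⌉₊ with hK
  have hK1 : 1 ≤ K := by
    have : (0:ℝ) < 1/ε := by positivity
    exact Nat.ceil_pos.mpr this
  have hit : Monotone (fun k => F^[k] 0) := by
    apply monotone_nat_of_le_succ
    intro k
    rw [Function.iterate_succ_apply']
    exact Nat.le_add_right _ _
  -- find a good step
  by_cases h : ∃ k < K, a (F^[k+1] 0) - a (F^[k] 0) ≤ ε
  · obtain ⟨k, hk, hkε⟩ := h
    refine ⟨F^[k] 0, hit (Nat.le_of_lt hk), ?_⟩
    intro i hi hi' j hj hj'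
    have hFk : F^[k] 0 + g (F^[k] 0) = F^[k+1] 0 := by
      rw [Function.iterate_succ_apply']
    rw [hFk] at hi' hj'
    have h1 : a (F^[k] 0) ≤ a i := hm hi
    have h2 : a i ≤ a (F^[k+1] 0) := hm hi'
    have h3 : a (F^[k] 0) ≤ a j := hm hj
    have h4 : a j ≤ a (F^[k+1] 0) := hm hj'
    rw [abs_sub_le_iff]
    constructor <;> linarith
  · exfalso
    push_neg at h
    have hsum : ∑ k ∈ Finset.range K, ε <
        ∑ k ∈ Finset.range K, (a (F^[k+1] 0) - a (F^[k] 0)) := by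
      apply Finset.sum_lt_sum_of_nonempty
      · exact Finset.nonempty_range_iff.mpr (by omega)
      · intro k hk
        exact h k (Finset.mem_range.mp hk)
    rw [Finset.sum_range_sub (fun k => a (F^[k] 0)), Finset.sum_const,
      Finset.card_range, nsmul_eq_mul] at hsum
    have h1 : (1:ℝ) ≤ K * ε := by
      have := Nat.le_ceil (1/ε)
      calc (1:ℝ) = (1/ε) * ε := by field_simp
        _ ≤ K * ε := by apply mul_le_mul_of_nonneg_right this hε.le
    have h2 := (ha (F^[K] 0)).2
    have h3 := (ha (F^[0] 0)).1
    linarith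

theorem metastable_monotone_convergence
    (a : ℕ → ℝ) (ha : ∀ n, a n ∈ Set.Icc (0:ℝ) 1)
    (hmono : Monotone a ∨ Antitone a)
    (ε : ℝ) (hε : 0 < ε) (g : ℕ → ℕ) :
    ∃ N ≤ (fun n => n + g n)^[⌈1/ε⌉₊] 0,
      ∀ i, N ≤ i → i ≤ N + g N → ∀ j, N ≤ j → j ≤ N + g N → |a i - a j| ≤ ε := by
  rcases hmono with hm | hm
  · exact metastable_aux a ha hm ε hε g
  · obtain ⟨N, hN, hgood⟩ := metastable_aux (fun n => 1 - a n)
      (fun n => ⟨by show (0:ℝ) ≤ 1 - a n; linarith [(ha n).2], by show 1 - a n ≤ 1; linarith [(ha n).1]⟩)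
      (fun i j hij => by simp only; linarith [hm hij]) ε hε g
    refine ⟨N, hN, ?_⟩
    intro i hi hi' j hj hj'
    have := hgood i hi hi' j hj hj'
    rw [show (1 - a i) - (1 - a j) = -(a i - a j) by ring, abs_neg] at this
    exact this
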